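/- Suppose there is an invertible W = [W_1, W_2, W_3] with W^T K_G W = diag(Λ_1, Λ_2, 0) and W^T K W = diag(I_{n_1}, 0, 0), where Λ_1, Λ_2 are real diagonal and Λ_2 invertible, and W_3^T W_1 = 0, W_3^T W_2 = 0. Then for σ ≠ 0 with I_{n_1} - σΛ_1 invertible, the matrix C = (K - σK_G)† K satisfies C W = W diag((I_{n_1} - σΛ_1)^{-1}, 0, 0). -/

import Mathlib

open Matrix

/-- The four Moore–Penrose conditions characterizing the pseudo-inverse `P` of `A`. -/
def IsMoorePenrose {m : Type*} [Fintype m] (A P : Matrix m m ℝ) : Prop :=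
  A * P * A = A ∧ P * A * P = P ∧ (A * P)ᵀ = A * P ∧ (P * A)ᵀ = P * A

/-- Given the canonical form W = [W₁ W₂ W₃] invertible with
WᵀK_GW = diag(Λ₁, Λ₂, 0), WᵀKW = diag(I, 0, 0), Λ₂ invertible, W₃ᵀW₁ = W₃ᵀW₂ = 0,
and σ ≠ 0 with I - σΛ₁ invertible, the matrix C = (K - σK_G)†K satisfies
C W = W diag((I - σΛ₁)⁻¹, 0, 0). -/
theorem stmt12 {n1 n2 n3 : ℕ}
    (K KG : Matrix (Fin n1 ⊕ (Fin n2 ⊕ Fin n3)) (Fin n1 ⊕ (Fin n2 ⊕ Fin n3)) ℝ)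
    (hK : Kᵀ = K) (hKG : KGᵀ = KG)
    (W : Matrix (Fin n1 ⊕ (Fin n2 ⊕ Fin n3)) (Fin n1 ⊕ (Fin n2 ⊕ Fin n3)) ℝ)
    (hW : IsUnit W)
    (Λ1 : Fin n1 → ℝ) (Λ2 : Fin n2 → ℝ) (hΛ2 : ∀ i, Λ2 i ≠ 0)
    (hcanKG : Wᵀ * KG * W
      = Matrix.fromBlocks (Matrix.diagonal Λ1) 0 0
          (Matrix.fromBlocks (Matrix.diagonal Λ2) 0 0 0))
    (hcanK : Wᵀ * K * W
      = Matrix.fromBlocks (1 : Matrix (Fin n1) (Fin n1) ℝ) 0 0 0)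
    (hW31 : (W.submatrix id (Sum.inr ∘ Sum.inr : Fin n3 → _))ᵀ
      * W.submatrix id (Sum.inl : Fin n1 → _) = 0)
    (hW32 : (W.submatrix id (Sum.inr ∘ Sum.inr : Fin n3 → _))ᵀ
      * W.submatrix id (Sum.inr ∘ Sum.inl : Fin n2 → _) = 0)
    (σ : ℝ) (hσ : σ ≠ 0) (hσΛ1 : ∀ i, 1 - σ * Λ1 i ≠ 0)
    (P : Matrix (Fin n1 ⊕ (Fin n2 ⊕ Fin n3)) (Fin n1 ⊕ (Fin n2 ⊕ Fin n3)) ℝ)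
    (hP : IsMoorePenrose (K - σ • KG) P) :
    (P * K) * W
      = W * Matrix.fromBlocks (Matrix.diagonal fun i => (1 - σ * Λ1 i)⁻¹) 0 0 0 := by
  classical
  set A : Matrix (Fin n1 ⊕ (Fin n2 ⊕ Fin n3)) (Fin n1 ⊕ (Fin n2 ⊕ Fin n3)) ℝ := K - σ • KG
    with hAdef
  have hAT : Aᵀ = A := by
    rw [hAdef, transpose_sub, transpose_smul, hK, hKG]
  -- P * A * A = A
  have hPAA : P * A * A = A := by
    obtain ⟨h1, -, -, h4⟩ := hP
    have h5 : A * (Pᵀ * A) = A := by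
      have := congrArg Matrix.transpose h1
      rwa [transpose_mul, transpose_mul, hAT] at this
    calc P * A * A = (P * A)ᵀ * A := by rw [h4]
      _ = Aᵀ * Pᵀ * A := by rw [transpose_mul]
      _ = A * (Pᵀ * A) := by rw [hAT, Matrix.mul_assoc]
      _ = A := h5
  -- cancellation by Wᵀ
  have hWTdet : IsUnit Wᵀ.det := by
    rw [Matrix.det_transpose]; exact (Matrix.isUnit_iff_isUnit_det W).mp hW
  have hcancel : ∀ X Y : Matrix (Fin n1 ⊕ (Fin n2 ⊕ Fin n3)) (Fin n1 ⊕ (Fin n2 ⊕ Fin n3)) ℝ,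
      Wᵀ * X = Wᵀ * Y → X = Y := by
    intro X Y h
    have := congrArg ((Wᵀ)⁻¹ * ·) h
    simpa [← Matrix.mul_assoc, Matrix.nonsing_inv_mul _ hWTdet] using this
  -- diagonal data
  set dA : (Fin n1 ⊕ (Fin n2 ⊕ Fin n3)) → ℝ :=
    Sum.elim (fun i => 1 - σ * Λ1 i) (Sum.elim (fun i => -(σ * Λ2 i)) 0) with hdA
  set dE : (Fin n1 ⊕ (Fin n2 ⊕ Fin n3)) → ℝ :=
    Sum.elim (fun i => (1 - σ * Λ1 i)⁻¹) 0 with hdE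
  set dF : (Fin n1 ⊕ (Fin n2 ⊕ Fin n3)) → ℝ :=
    Sum.elim (fun i => (1 - σ * Λ1 i)⁻¹) (Sum.elim (fun i => (-(σ * Λ2 i))⁻¹) 0) with hdF
  set dK : (Fin n1 ⊕ (Fin n2 ⊕ Fin n3)) → ℝ := Sum.elim (fun _ => (1:ℝ)) 0 with hdK
  -- rewrite canonical forms as diagonal matrices
  have hEdiag : Matrix.fromBlocks (Matrix.diagonal fun i => (1 - σ * Λ1 i)⁻¹) 0 0
      (0 : Matrix (Fin n2 ⊕ Fin n3) (Fin n2 ⊕ Fin n3) ℝ) = Matrix.diagonal dE := by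
    rw [show (0 : Matrix (Fin n2 ⊕ Fin n3) (Fin n2 ⊕ Fin n3) ℝ)
        = Matrix.diagonal 0 from Matrix.diagonal_zero.symm, Matrix.fromBlocks_diagonal]
  have hcanK' : Wᵀ * K * W = Matrix.diagonal dK := by
    rw [hcanK, show (1 : Matrix (Fin n1) (Fin n1) ℝ)
        = Matrix.diagonal (fun _ => (1:ℝ)) from Matrix.diagonal_one.symm,
      show (0 : Matrix (Fin n2 ⊕ Fin n3) (Fin n2 ⊕ Fin n3) ℝ)
        = Matrix.diagonal 0 from Matrix.diagonal_zero.symm, Matrix.fromBlocks_diagonal]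
  have hcanKG' : Wᵀ * KG * W = Matrix.diagonal (Sum.elim Λ1 (Sum.elim Λ2 0)) := by
    rw [hcanKG, show (0 : Matrix (Fin n3) (Fin n3) ℝ)
        = Matrix.diagonal 0 from Matrix.diagonal_zero.symm,
      Matrix.fromBlocks_diagonal, Matrix.fromBlocks_diagonal]
  have hWAW : Wᵀ * A * W = Matrix.diagonal dA := by
    have hsub : Wᵀ * A * W = Wᵀ * K * W - σ • (Wᵀ * KG * W) := by
      rw [hAdef]
      simp only [Matrix.sub_mul, Matrix.mul_sub, Matrix.smul_mul, Matrix.mul_smul]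
    rw [hsub, hcanK', hcanKG', ← Matrix.diagonal_smul, Matrix.diagonal_sub]
    refine congrArg Matrix.diagonal (funext fun i => ?_)
    rcases i with i | i | i <;> simp [hdA, hdK] <;> ring
  -- K * W = A * (W * diagonal dE)
  have hKW : K * W = A * (W * Matrix.diagonal dE) := by
    apply hcancel
    have h1 : Wᵀ * (A * (W * Matrix.diagonal dE)) = Wᵀ * A * W * Matrix.diagonal dE := by
      simp only [Matrix.mul_assoc]
    rw [h1, hWAW, Matrix.diagonal_mul_diagonal, ← Matrix.mul_assoc, hcanK']
    refine congrArg Matrix.diagonal (funext fun i => ?_)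
    rcases i with i | i | i <;>
      simp [hdA, hdE, hdK, mul_inv_cancel₀ (hσΛ1 _)]
  -- the projected matrix M
  set M : Matrix (Fin n1 ⊕ (Fin n2 ⊕ Fin n3)) (Fin n1 ⊕ (Fin n2 ⊕ Fin n3)) ℝ :=
    Wᵀ * (W * Matrix.diagonal dE) with hM
  have hW31' : ∀ (k : Fin n3) (j : Fin n1),
      (∑ a, W a (Sum.inr (Sum.inr k)) * W a (Sum.inl j)) = 0 := by
    intro k j
    have := congrFun (congrFun hW31 k) j
    simpa [Matrix.mul_apply, Matrix.transpose_apply, Matrix.submatrix_apply] using this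
  have hM0 : ∀ (k : Fin n3) j, M (Sum.inr (Sum.inr k)) j = 0 := by
    intro k j
    rw [hM, Matrix.mul_apply]
    rcases j with j | j
    · have he : ∀ a, Wᵀ (Sum.inr (Sum.inr k)) a * (W * Matrix.diagonal dE) a (Sum.inl j)
          = (W a (Sum.inr (Sum.inr k)) * W a (Sum.inl j)) * (1 - σ * Λ1 j)⁻¹ := by
        intro a
        rw [Matrix.mul_diagonal, Matrix.transpose_apply]
        simp only [hdE, Sum.elim_inl]
        ring
      rw [Finset.sum_congr rfl fun a _ => he a, ← Finset.sum_mul, hW31' k j, zero_mul]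
    · have he : ∀ a, Wᵀ (Sum.inr (Sum.inr k)) a * (W * Matrix.diagonal dE) a (Sum.inr j) = 0 := by
        intro a
        rw [Matrix.mul_diagonal]
        rcases j with j | j <;> simp [hdE]
      rw [Finset.sum_congr rfl fun a _ => he a, Finset.sum_const_zero]
  -- diagonal dA * (diagonal dF * M) = M
  have hproj : Matrix.diagonal dA * (Matrix.diagonal dF * M) = M := by
    rw [← Matrix.mul_assoc, Matrix.diagonal_mul_diagonal]
    ext i j
    rw [Matrix.diagonal_mul]
    rcases i with i | i | i
    · simp [hdA, hdF, mul_inv_cancel₀ (hσΛ1 i)]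
    · have h2 : -(σ * Λ2 i) ≠ 0 := by
        simpa using mul_ne_zero hσ (hΛ2 i)
      simp [hdA, hdF, mul_inv_cancel₀ h2]
      rw [show σ * Λ2 i * ((Λ2 i)⁻¹ * σ⁻¹) = 1 by
        rw [mul_assoc, mul_inv_cancel_left₀ (hΛ2 i), mul_inv_cancel₀ hσ], one_mul]
    · simp [hdA, hdF, hM0 i j]
  -- W * diagonal dE is in the range of A
  have hrange : A * (W * (Matrix.diagonal dF * M)) = W * Matrix.diagonal dE := by
    apply hcancel
    have h1 : Wᵀ * (A * (W * (Matrix.diagonal dF * M)))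
        = Wᵀ * A * W * (Matrix.diagonal dF * M) := by
      simp only [Matrix.mul_assoc]
    rw [h1, hWAW, ← Matrix.mul_assoc, Matrix.mul_assoc (Matrix.diagonal dA), hproj, hM]
  -- conclude
  have hfinal : (P * K) * W = W * Matrix.diagonal dE := by
    calc (P * K) * W = P * (K * W) := by rw [Matrix.mul_assoc]
      _ = P * (A * (A * (W * (Matrix.diagonal dF * M)))) := by rw [hKW, hrange]
      _ = (P * A * A) * (W * (Matrix.diagonal dF * M)) := by simp only [Matrix.mul_assoc]
      _ = A * (W * (Matrix.diagonal dF * M)) := by rw [hPAA]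
      _ = W * Matrix.diagonal dE := hrange
  rw [hfinal, hEdiag]
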